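/- Suppose H is stoquastic and irreducible in the basis B, positive semidefinite with ‖H‖ > E₀, every non-zero off-diagonal entry of H has magnitude at least Γ > 0, and ψ is the strictly positive unit-norm ground state of H. Then for every pair x ≠ y with H_{xy} ≠ 0, ψ_y/ψ_x ≥ Γ/‖H‖, and consequently the quantity P_{xy} := (ψ_y/ψ_x)·(‖H‖δ_{xy} − H_{xy})/(‖H‖ − E₀) satisfies P_{xy} ≥ (Γ/‖H‖)². -/

import Mathlib

open scoped BigOperators ComplexOrder

/-- The ℓ²-operator norm of a matrix over ℂ. -/
noncomputable def opNorm {B : Type*} [Fintype B] [DecidableEq B] (H : Matrix B B ℂ) : ℝ :=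
  ‖Matrix.toEuclideanCLM (𝕜 := ℂ) H‖

/-- The ground-state probability measure of a subset `S`. -/
noncomputable def piS {B : Type*} (ψ : B → ℂ) (S : Finset B) : ℝ :=
  ∑ z ∈ S, ‖ψ z‖ ^ 2

open scoped Classical in
/-- The interior boundary `∂S` of the set `S` with respect to the matrix `H`. -/
noncomputable def bdry {B : Type*} [Fintype B] (H : Matrix B B ℂ) (S : Finset B) : Finset B :=
  S.filter (fun x => ∃ y ∉ S, H x y ≠ 0)

/-- A diagonal entry's real part is at most the operator norm. -/
theorem diag_re_le_opNorm {B : Type*} [Fintype B] [DecidableEq B] (H : Matrix B B ℂ) (x : B) :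
    (H x x).re ≤ opNorm H := by
  set T := Matrix.toEuclideanCLM (𝕜 := ℂ) H
  set e : EuclideanSpace ℂ B := EuclideanSpace.single x 1
  have he : ‖e‖ = 1 := by simp [e]
  have hTe : T e = (WithLp.equiv 2 (B → ℂ)).symm (H.mulVec (Pi.single x 1)) := by
    have h1 : e = (WithLp.equiv 2 (B → ℂ)).symm (Pi.single x 1) := rfl
    rw [h1]; exact Matrix.toEuclideanCLM_toLp _ _
  have hinner : inner ℂ e (T e) = H x x := by
    rw [hTe, EuclideanSpace.inner_single_left]
    simp [Matrix.mulVec_single]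
  calc (H x x).re ≤ ‖H x x‖ := Complex.re_le_norm _
    _ = ‖(inner ℂ e (T e) : ℂ)‖ := by rw [hinner]
    _ ≤ ‖e‖ * ‖T e‖ := norm_inner_le_norm _ _
    _ ≤ ‖e‖ * (‖T‖ * ‖e‖) := by gcongr; exact T.le_opNorm e
    _ = ‖T‖ := by rw [he]; ring

/-- Inequality (39) of the paper: for an irreducible stoquastic `H` with strictly
positive ground state `ψ`, whenever `H_{xy} ≠ 0` for `x ≠ y` we have
`ψ_y/ψ_x ≥ Γ/‖H‖`, hence `P_{xy} := (ψ_y/ψ_x)(‖H‖δ_{xy} - H_{xy})/(‖H‖-E₀)`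
satisfies `P_{xy} ≥ (Γ/‖H‖)²`. -/
theorem stmt_13 {B : Type*} [Fintype B] [DecidableEq B]
    (H : Matrix B B ℂ) (hH : H.IsHermitian) (hPSD : H.PosSemidef)
    -- `H` is stoquastic in the basis `B`: real entries, non-positive off the diagonal:
    (hreal : ∀ z z', (H z z').im = 0)
    (hstoq : ∀ z z', z ≠ z' → (H z z').re ≤ 0)
    -- `H` is irreducible:
    (hirr : (SimpleGraph.fromRel (fun z z' : B => H z z' ≠ 0)).Connected)
    -- every non-zero off-diagonal entry has magnitude at least `Γ > 0`:
    (Γ : ℝ) (hΓ : 0 < Γ)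
    (hΓle : ∀ z z', z ≠ z' → H z z' ≠ 0 → Γ ≤ ‖H z z'‖)
    -- `ψ` is the strictly positive unit-norm ground state, `E₀` the smallest eigenvalue:
    (E₀ : ℝ) (hleast : ∀ i, E₀ ≤ hH.eigenvalues i)
    (hgap : E₀ < opNorm H)
    (ψ : B → ℝ) (hpos : ∀ x, 0 < ψ x) (hψnorm : ∑ z, ψ z ^ 2 = 1)
    (hground : H.mulVec (fun x => (ψ x : ℂ)) = (E₀ : ℂ) • fun x => (ψ x : ℂ)) :
    ∀ x y, x ≠ y → H x y ≠ 0 →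
      Γ / opNorm H ≤ ψ y / ψ x ∧
      (Γ / opNorm H) ^ 2 ≤
        ψ y / ψ x * ((opNorm H * (if x = y then 1 else 0) - (H x y).re) /
          (opNorm H - E₀)) := by
  -- E₀ is nonnegative
  have hE0 : 0 ≤ E₀ := by
    have h := hPSD.dotProduct_mulVec_nonneg (fun x => (ψ x : ℂ))
    rw [hground] at h
    have heq : dotProduct (star (fun x => (ψ x : ℂ))) ((E₀ : ℂ) • fun x => (ψ x : ℂ)) = (E₀ : ℂ) := by
      simp only [dotProduct, Pi.star_apply, Pi.smul_apply, smul_eq_mul,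
        Complex.star_def, Complex.conj_ofReal]
      have : ∀ z : B, (ψ z : ℂ) * ((E₀ : ℂ) * ψ z) = (E₀ : ℂ) * ((ψ z : ℂ) ^ 2) := by
        intro z; ring
      rw [Finset.sum_congr rfl (fun z _ => this z), ← Finset.mul_sum]
      have : (∑ z : B, (ψ z : ℂ) ^ 2) = ((∑ z : B, ψ z ^ 2 : ℝ) : ℂ) := by push_cast; ring
      rw [this, hψnorm]; simp
    rw [heq] at h
    exact_mod_cast Complex.zero_le_real.mp h
  have hN : 0 < opNorm H := lt_of_le_of_lt hE0 hgap
  intro x y hxy hHxy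
  -- the row equation at y, in real form
  have hrowC := congrFun hground y
  have hrow : ∑ z, (H y z).re * ψ z = E₀ * ψ y := by
    have := congrArg Complex.re hrowC
    simp only [Matrix.mulVec, dotProduct, Pi.smul_apply, smul_eq_mul,
      Complex.re_sum, Complex.mul_re, hreal, Complex.ofReal_re, Complex.ofReal_im,
      mul_zero, zero_mul, sub_zero] at this
    simpa using this
  -- H y x equals H x y (real Hermitian)
  have hsym : (H y x).re = (H x y).re := by
    have h2 : star (H x y) = H y x := by
      have := congrFun (congrFun hH y) x
      simpa [Matrix.conjTranspose_apply] using this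
    rw [← h2]; simp
  -- magnitude bound: Γ ≤ -(H x y).re
  have hHre : H x y = ((H x y).re : ℂ) := Complex.ext rfl (by simp [hreal])
  have habs : ‖H x y‖ = |(H x y).re| := by
    rw [hHre]; exact Complex.norm_real _
  have hle0 : (H x y).re ≤ 0 := hstoq x y hxy
  have hΓre : Γ ≤ -(H x y).re := by
    have := hΓle x y hxy hHxy
    rwa [habs, abs_of_nonpos hle0] at this
  -- split the row sum at z = x
  have hxmem : x ∈ (Finset.univ : Finset B).erase y := Finset.mem_erase.mpr ⟨hxy, Finset.mem_univ x⟩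
  have hsplit1 : (H y y).re * ψ y + ∑ z ∈ Finset.univ.erase y, (H y z).re * ψ z = E₀ * ψ y := by
    exact (Finset.add_sum_erase Finset.univ (fun z => (H y z).re * ψ z)
      (Finset.mem_univ y)).trans hrow
  have hsplit2 : (H y x).re * ψ x + ∑ z ∈ (Finset.univ.erase y).erase x, (H y z).re * ψ z
      = ∑ z ∈ Finset.univ.erase y, (H y z).re * ψ z :=
    Finset.add_sum_erase (Finset.univ.erase y) (fun z => (H y z).re * ψ z) hxmem
  have hrest : ∑ z ∈ (Finset.univ.erase y).erase x, (H y z).re * ψ z ≤ 0 := by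
    apply Finset.sum_nonpos
    intro z hz
    have hz' : z ≠ y := (Finset.mem_erase.mp (Finset.mem_erase.mp hz).2).1
    exact mul_nonpos_of_nonpos_of_nonneg (hstoq y z (Ne.symm hz')) (hpos z).le
  have hdiag : (H y y).re ≤ opNorm H := diag_re_le_opNorm H y
  -- key inequality: Γ * ψ x ≤ opNorm H * ψ y
  have key : Γ * ψ x ≤ opNorm H * ψ y := by
    have h1 : E₀ * ψ y - (H y y).re * ψ y ≤ (H y x).re * ψ x := by linarith
    have h2 : -(H x y).re * ψ x ≤ ((H y y).re - E₀) * ψ y := by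
      rw [← hsym]; nlinarith [hpos x, hpos y]
    nlinarith [hpos x, hpos y]
  have hfirst : Γ / opNorm H ≤ ψ y / ψ x := by
    rw [div_le_div_iff₀ hN (hpos x)]
    linarith [key]
  refine ⟨hfirst, ?_⟩
  have hNE : 0 < opNorm H - E₀ := by linarith
  have hsecond : Γ / opNorm H ≤ (-(H x y).re) / (opNorm H - E₀) := by
    calc Γ / opNorm H ≤ Γ / (opNorm H - E₀) := by
          apply div_le_div_of_nonneg_left hΓ.le hNE; linarith
      _ ≤ (-(H x y).re) / (opNorm H - E₀) := by gcongr
  have hfinal : (Γ / opNorm H) ^ 2 ≤ ψ y / ψ x * ((-(H x y).re) / (opNorm H - E₀)) := by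
    rw [sq]
    exact mul_le_mul hfirst hsecond (by positivity) (div_nonneg (hpos y).le (hpos x).le)
  simpa [if_neg hxy, zero_sub] using hfinal
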